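/- For every α > 0 and every non-degenerate normalized class adjacency matrix C, the matrix rand(C) with entries rand(C)_{ij} = a_i·a_j (where a_i = ∑_k c_ik) is itself a non-degenerate normalized class adjacency matrix and satisfies h_unb^α(rand(C)) = α (constant baseline). -/
import Mathlib


/-- A normalized class adjacency matrix: symmetric, nonnegative entries, entries sum to 1. -/
def IsNCAM {m : ℕ} (C : Matrix (Fin m) (Fin m) ℝ) : Prop :=
  (∀ i j, C i j = C j i) ∧ (∀ i j, 0 ≤ C i j) ∧ (∑ i : Fin m, ∑ j : Fin m, C i j = 1)

/-- Non-degenerate: at least two nonzero entries. -/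
def Nondeg {m : ℕ} (C : Matrix (Fin m) (Fin m) ℝ) : Prop :=
  ∃ p q : Fin m × Fin m, p ≠ q ∧ C p.1 p.2 ≠ 0 ∧ C q.1 q.2 ≠ 0

/-- Unbiased homophily (α = 0). -/
noncomputable def hUnb {m : ℕ} (C : Matrix (Fin m) (Fin m) ℝ) : ℝ :=
  (∑ i : Fin m, ∑ j : Fin m, if i < j then Real.sqrt (C i i * C j j) - C i j else 0) /
  (∑ i : Fin m, ∑ j : Fin m, if i < j then Real.sqrt (C i i * C j j) + C i j else 0)

/-- Unbiased homophily with parameter α. -/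
noncomputable def hUnbAlpha {m : ℕ} (α : ℝ) (C : Matrix (Fin m) (Fin m) ℝ) : ℝ :=
  hUnb C + α * min (∑ i : Fin m, Real.sqrt (C i i)) 1

/-- rand(C) for undirected graphs: rand(C)_{ij} = a_i · a_j where a_i = ∑_k c_{ik}. -/
noncomputable def randM {m : ℕ} (C : Matrix (Fin m) (Fin m) ℝ) : Matrix (Fin m) (Fin m) ℝ :=
  Matrix.of fun i j => (∑ k : Fin m, C i k) * (∑ k : Fin m, C j k)
/-- constant baseline for h_unb^α. -/
theorem constant_baseline {m : ℕ} (α : ℝ) (hα : 0 < α)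
    (C : Matrix (Fin m) (Fin m) ℝ) (hC : IsNCAM C) (hnd : Nondeg C) :
    IsNCAM (randM C) ∧ Nondeg (randM C) ∧ hUnbAlpha α (randM C) = α := by
  obtain ⟨hsym, hnn, hsum⟩ := hC
  set a : Fin m → ℝ := fun i => ∑ k : Fin m, C i k with ha
  have hr : ∀ i j, randM C i j = a i * a j := fun i j => rfl
  have hann : ∀ i, 0 ≤ a i := fun i => Finset.sum_nonneg fun k _ => hnn i k
  have hasum : ∑ i : Fin m, a i = 1 := hsum
  -- positive row sums from nonzero entries
  have hpos : ∀ i j, C i j ≠ 0 → 0 < a i := by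
    intro i j h
    have : 0 < C i j := lt_of_le_of_ne (hnn i j) (Ne.symm h)
    exact lt_of_lt_of_le this (Finset.single_le_sum (fun k _ => hnn i k) (Finset.mem_univ j))
  -- two distinct indices with positive row sums
  obtain ⟨p, q, hpq, hp, hq⟩ := hnd
  have htwo : ∃ i j : Fin m, i ≠ j ∧ 0 < a i ∧ 0 < a j := by
    by_cases h1 : p.1 = q.1
    · have h2 : p.2 ≠ q.2 := by
        intro h2; exact hpq (Prod.ext h1 h2)
      refine ⟨p.2, q.2, h2, ?_, ?_⟩
      · exact hpos p.2 p.1 (by rw [← hsym]; exact hp)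
      · exact hpos q.2 q.1 (by rw [← hsym]; exact hq)
    · exact ⟨p.1, q.1, h1, hpos p.1 p.2 hp, hpos q.1 q.2 hq⟩
  obtain ⟨i0, j0, hij, hi0, hj0⟩ := htwo
  have hsqrt : ∀ i j : Fin m, Real.sqrt (randM C i i * randM C j j) = a i * a j := by
    intro i j
    have : randM C i i * randM C j j = (a i * a j) * (a i * a j) := by
      rw [hr, hr]; ring
    rw [this, Real.sqrt_mul_self (mul_nonneg (hann i) (hann j))]
  refine ⟨⟨fun i j => by rw [hr, hr, mul_comm], fun i j => mul_nonneg (hann i) (hann j), ?_⟩,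
    ⟨(i0, i0), (j0, j0), ?_, ?_, ?_⟩, ?_⟩
  · have : ∑ i : Fin m, ∑ j : Fin m, randM C i j = (∑ i : Fin m, a i) * (∑ j : Fin m, a j) := by
      simp only [hr]; rw [← Finset.sum_mul_sum]
    rw [this, hasum, one_mul]
  · simp only [ne_eq, Prod.mk.injEq]
    intro h; exact hij h.1
  · exact ne_of_gt (by rw [hr]; positivity)
  · exact ne_of_gt (by rw [hr]; positivity)
  · have hnum : hUnb (randM C) = 0 := by
      unfold hUnb
      have : (∑ i : Fin m, ∑ j : Fin m, if i < j then
          Real.sqrt (randM C i i * randM C j j) - randM C i j else 0) = 0 := by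
        apply Finset.sum_eq_zero; intro i _
        apply Finset.sum_eq_zero; intro j _
        rw [hsqrt i j, hr]; simp
      rw [this, zero_div]
    have hdiag : (∑ i : Fin m, Real.sqrt (randM C i i)) = 1 := by
      have : ∀ i : Fin m, Real.sqrt (randM C i i) = a i := by
        intro i; rw [hr, Real.sqrt_mul_self (hann i)]
      simp only [this, hasum]
    unfold hUnbAlpha
    rw [hnum, hdiag, min_self, zero_add, mul_one]
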